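/- For all keys x, y ∈ {0,1}^256 and every natural number l ≤ 256, the common prefix length of x and y is at least l if and only if the XOR distance between x and y is strictly less than 2^(256−l). -/

import Mathlib

/-- The common prefix length of two keys in `{0,1}^n`: the number of leading bits
(indexed from the most significant bit) on which they agree. -/
def cpl {n : ℕ} (x y : BitVec n) : ℕ :=
  ((List.range n).takeWhile (fun i => x.getMsbD i == y.getMsbD i)).length

/-- The XOR distance between two keys: their bitwise XOR interpreted as a natural number. -/
def xorDist {n : ℕ} (x y : BitVec n) : ℕ := (x ^^^ y).toNat

/-- For all keys `x, y ∈ {0,1}^256` and every `l ≤ 256`, the common prefix length of `x`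
and `y` is at least `l` iff the XOR distance between `x` and `y` is less than `2^(256-l)`. -/

lemma le_len_takeWhile_range {p : ℕ → Bool} {n l : ℕ} (hl : l ≤ n) :
    l ≤ ((List.range n).takeWhile p).length ↔ ∀ i < l, p i = true := by
  set t := ((List.range n).takeWhile p).length with htdef
  have hpre := List.takeWhile_prefix (l := List.range n) p
  have ht : t ≤ n := by simpa using hpre.length_le
  have htake : (List.range n).takeWhile p = (List.range n).take t :=
    List.prefix_iff_eq_take.mp hpre
  constructor
  · intro h i hi
    refine List.mem_takeWhile_imp (x := i) (l := List.range n) ?_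
    rw [htake, List.take_range]
    exact List.mem_range.mpr (lt_of_lt_of_le hi (le_min h hl |>.trans (le_of_eq rfl)))
  · intro h
    by_contra hc
    push_neg at hc
    have htn : t < n := lt_of_lt_of_le hc hl
    have hdw : (List.range n).dropWhile p = (List.range n).drop t := by
      have h1 : (List.range n).takeWhile p ++ (List.range n).dropWhile p = List.range n :=
        List.takeWhile_append_dropWhile
      have h2 : (List.range n).take t ++ (List.range n).drop t = List.range n :=
        List.take_append_drop t _
      rw [htake] at h1
      exact List.append_cancel_left (h1.trans h2.symm)
    have hne : (List.range n).drop t ≠ [] := by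
      simp [List.drop_eq_nil_iff, htn.not_ge]
    have hp : p (((List.range n).dropWhile p).head (by rw [hdw]; exact hne)) = false :=
      List.head_dropWhile_not p _
    have hhead : ((List.range n).dropWhile p).head (by rw [hdw]; exact hne) = t := by
      have := List.head_drop (l := List.range n) (i := t) hne
      simp only [hdw]
      rw [this, List.getElem_range]
    rw [hhead, h t hc] at hp
    simp at hp

lemma lt_two_pow_iff_testBit {z k : ℕ} :
    z < 2 ^ k ↔ ∀ i, k ≤ i → z.testBit i = false := by
  constructor
  · intro h i hi
    exact Nat.testBit_lt_two_pow (lt_of_lt_of_le h (Nat.pow_le_pow_right two_pos hi))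
  · intro h
    by_contra hc
    obtain ⟨i, hi, hb⟩ := Nat.exists_ge_and_testBit_of_ge_two_pow (le_of_not_gt hc)
    simp [h i hi] at hb

theorem cpl_ge_iff_xorDist_lt (x y : BitVec 256) (l : ℕ) (hl : l ≤ 256) :
    l ≤ cpl x y ↔ xorDist x y < 2 ^ (256 - l) := by
  rw [cpl, le_len_takeWhile_range hl, xorDist, lt_two_pow_iff_testBit]
  have key : ∀ i, (x ^^^ y).toNat.testBit i = ((x ^^^ y).getLsbD i) := fun i => rfl
  constructor
  · intro h i hi
    rw [key]
    by_cases hi2 : i < 256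
    · have := h (255 - i) (by omega)
      simp only [beq_iff_eq, BitVec.getMsbD_eq_getLsbD] at this
      have h255 : 255 - (255 - i) = i := by omega
      simp [h255, show 255 - i < 256 by omega] at this
      simp [BitVec.getLsbD_xor, this]
    · exact BitVec.getLsbD_of_ge _ i (by omega)
  · intro h j hj
    have := h (255 - j) (by omega)
    rw [key] at this
    simp only [BitVec.getLsbD_xor] at this
    simp [BitVec.getMsbD_eq_getLsbD, show j < 256 by omega, (by revert this; cases x.getLsbD (255 - j) <;> cases y.getLsbD (255 - j) <;> simp : x.getLsbD (255 - j) = y.getLsbD (255 - j))]
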